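/- Let H be a real Hilbert space, A : H → H a continuous self-adjoint linear operator that is coercive, i.e. there exists ν > 0 with ⟨Ax,x⟩ ≥ ν|x|² for all x ∈ H. Let 0 ≤ p ≤ 1, γ ≥ 1, and u₀ ∈ H with ⟨Au₀,u₀⟩ > 0, and let u : [0,∞) → H be a C¹ solution of u'(t) + (1+t)^{p} ⟨Au(t),u(t)⟩^γ A u(t) = 0 with u(0) = u₀. Then there exists a constant γ₄ > 0 (depending only on u₀, A, γ, p) such that for all t ≥ 0: ⟨Au(t),u(t)⟩ ≤ γ₄ (1+t)^{−(p+1)/γ}. -/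

import Mathlib

open Real
open scoped RealInnerProductSpace

/-- `u` (with derivative `u'`) is a global C¹ solution on `[0,∞)` of the parabolic
Cauchy problem `u' + (1+t)^{p} ⟨Au,u⟩^γ A u = 0`, `u(0) = u₀`. -/
def IsParSolution {H : Type*} [NormedAddCommGroup H] [InnerProductSpace ℝ H]
    (A : H →L[ℝ] H) (p γ : ℝ) (u₀ : H) (u u' : ℝ → H) : Prop :=
  u 0 = u₀ ∧
  (∀ t ∈ Set.Ici (0:ℝ), HasDerivWithinAt u (u' t) (Set.Ici 0) t) ∧
  ContinuousOn u' (Set.Ici 0) ∧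
  (∀ t ∈ Set.Ici (0:ℝ),
    u' t + ((1+t) ^ p * ⟪A (u t), u t⟫ ^ γ) • A (u t) = 0)

set_option maxHeartbeats 1000000 in
/-- Decay estimate (3.5) for coercive operators:
`⟨Au(t),u(t)⟩ ≤ γ₄ (1+t)^{-(p+1)/γ}`. -/
theorem parabolic_decay_coercive
    {H : Type*} [NormedAddCommGroup H] [InnerProductSpace ℝ H]
    (A : H →L[ℝ] H)
    (hA_sa : ∀ x y : H, ⟪A x, y⟫ = ⟪x, A y⟫)
    (ν : ℝ) (hν : 0 < ν)
    (hA_coer : ∀ x : H, ν * ‖x‖ ^ 2 ≤ ⟪A x, x⟫)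
    (p γ : ℝ) (hp0 : 0 ≤ p) (hp1 : p ≤ 1) (hγ : 1 ≤ γ)
    (u₀ : H) (hmdg : 0 < ⟪A u₀, u₀⟫)
    (u u' : ℝ → H) (hu : IsParSolution A p γ u₀ u u') :
    ∃ γ₄ > 0, ∀ t ∈ Set.Ici (0:ℝ),
      ⟪A (u t), u t⟫ ≤ γ₄ * (1+t) ^ (-(p+1)/γ) := by
  obtain ⟨hu0, hderiv, hcont, hode⟩ := hu
  set S := Set.Ici (0:ℝ) with hSdef
  have hγ0 : (0:ℝ) < γ := lt_of_lt_of_le one_pos hγ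
  have hp1pos : (0:ℝ) < p + 1 := by linarith
  set E : ℝ → ℝ := fun t => ⟪A (u t), u t⟫ with hEdef
  have hE0pos : 0 < E 0 := by simpa [hEdef, hu0] using hmdg
  have hEnn : ∀ t, 0 ≤ E t := fun t =>
    le_trans (mul_nonneg hν.le (sq_nonneg _)) (hA_coer (u t))
  have h1t : ∀ t ∈ S, (0:ℝ) < 1 + t := fun t ht => by
    simp only [hSdef, Set.mem_Ici] at ht; linarith
  -- the equation
  have hu'eq : ∀ t ∈ S, u' t = -(((1+t)^p * E t ^ γ) • A (u t)) :=
    fun t ht => eq_neg_of_add_eq_zero_left (hode t ht)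
  -- derivative of E
  set E' : ℝ → ℝ := fun t => -(2 * ((1+t)^p * E t ^ γ) * ‖A (u t)‖^2) with hE'def
  have hEderiv : ∀ t ∈ S, HasDerivWithinAt E (E' t) S t := by
    intro t ht
    have hAu : HasDerivWithinAt (fun s => A (u s)) (A (u' t)) S t :=
      A.hasFDerivAt.comp_hasDerivWithinAt t (hderiv t ht)
    have h1 := hAu.inner ℝ (hderiv t ht)
    have h2 : ⟪A (u t), u' t⟫ + ⟪A (u' t), u t⟫ = E' t := by
      have hc : ⟪A (A (u t)), u t⟫ = ⟪A (u t), A (u t)⟫ := hA_sa (A (u t)) (u t)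
      rw [hu'eq t ht]
      simp only [map_neg, map_smul, inner_neg_right, inner_neg_left,
        real_inner_smul_right, real_inner_smul_left, hc,
        real_inner_self_eq_norm_sq, hE'def]
      ring
    rw [h2] at h1
    exact h1
  have hE'nonpos : ∀ t ∈ S, E' t ≤ 0 := by
    intro t ht
    have h1 : (0:ℝ) ≤ (1+t)^p := (Real.rpow_pos_of_pos (h1t t ht) p).le
    have h2 : (0:ℝ) ≤ E t ^ γ := Real.rpow_nonneg (hEnn t) γ
    have := mul_nonneg (mul_nonneg (by norm_num : (0:ℝ) ≤ 2) (mul_nonneg h1 h2))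
      (sq_nonneg ‖A (u t)‖)
    simp only [hE'def]; linarith
  have hEcont : ContinuousOn E S := fun t ht => (hEderiv t ht).continuousWithinAt
  have hEanti : AntitoneOn E S := by
    refine antitoneOn_of_hasDerivWithinAt_nonpos (f' := E') (convex_Ici 0) hEcont ?_ ?_
    · intro t ht
      rw [interior_Ici] at ht ⊢
      exact (hEderiv t (Set.Ioi_subset_Ici_self ht)).mono Set.Ioi_subset_Ici_self
    · intro t ht
      rw [interior_Ici] at ht
      exact hE'nonpos t (Set.Ioi_subset_Ici_self ht)
  have hEle : ∀ t ∈ S, E t ≤ E 0 := fun t ht =>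
    hEanti Set.self_mem_Ici ht (by simpa [hSdef] using ht)
  -- positivity of E via integrating factor
  set K : ℝ := 2 * ‖A‖^2 * E 0 ^ γ / ν with hKdef
  have hKnn : 0 ≤ K := by
    apply div_nonneg _ hν.le
    exact mul_nonneg (mul_nonneg (by norm_num) (sq_nonneg _)) (Real.rpow_nonneg (hEnn 0) γ)
  have hpow_deriv : ∀ t ∈ S, HasDerivAt (fun s : ℝ => (1+s)^(p+1)) ((p+1)*(1+t)^p) t := by
    intro t ht
    have h1 : HasDerivAt (fun s : ℝ => 1+s) 1 t := by
      simpa using (hasDerivAt_id t).const_add (1:ℝ)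
    have h2 := (Real.hasDerivAt_rpow_const
      (x := 1+t) (p := p+1) (Or.inl (h1t t ht).ne')).comp t h1
    exact h2.congr_deriv (by simp [add_sub_cancel_right])
  set g : ℝ → ℝ := fun t => (K/(p+1)) * ((1+t)^(p+1) - 1) with hgdef
  have hg' : ∀ t ∈ S, HasDerivAt g (K * (1+t)^p) t := by
    intro t ht
    have h3 := ((hpow_deriv t ht).sub_const 1).const_mul (K/(p+1))
    refine h3.congr_deriv ?_
    field_simp
  set φ : ℝ → ℝ := fun t => E t * Real.exp (g t) with hφdef
  have hφderiv : ∀ t ∈ S,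
      HasDerivWithinAt φ ((E' t + K*(1+t)^p * E t) * Real.exp (g t)) S t := by
    intro t ht
    have h1 := (hEderiv t ht).mul ((hg' t ht).hasDerivWithinAt.exp)
    refine h1.congr_deriv ?_
    ring
  have hKey : ∀ t ∈ S, 0 ≤ E' t + K*(1+t)^p * E t := by
    intro t ht
    have hz : (0:ℝ) ≤ (1+t)^p := (Real.rpow_pos_of_pos (h1t t ht) p).le
    have hAop : ‖A (u t)‖ ≤ ‖A‖ * ‖u t‖ := A.le_opNorm (u t)
    have hAu2 : ‖A (u t)‖^2 ≤ ‖A‖^2 * ‖u t‖^2 := by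
      nlinarith [norm_nonneg (A (u t)), norm_nonneg (u t), norm_nonneg A]
    have hu2 : ‖u t‖^2 ≤ E t / ν := by
      rw [le_div_iff₀ hν]
      linarith [hA_coer (u t)]
    have hEγ : E t ^ γ ≤ E 0 ^ γ := Real.rpow_le_rpow (hEnn t) (hEle t ht) hγ0.le
    have hc1 : ‖A (u t)‖^2 ≤ ‖A‖^2 * (E t / ν) :=
      le_trans hAu2 (mul_le_mul_of_nonneg_left hu2 (sq_nonneg _))
    have hc2 : E t ^ γ * ‖A (u t)‖^2 ≤ E 0 ^ γ * (‖A‖^2 * (E t / ν)) :=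
      mul_le_mul hEγ hc1 (sq_nonneg _) (Real.rpow_nonneg (hEnn 0) γ)
    have hc3 : 2 * ((1+t)^p * (E t ^ γ * ‖A (u t)‖^2))
        ≤ 2 * ((1+t)^p * (E 0 ^ γ * (‖A‖^2 * (E t / ν)))) := by
      apply mul_le_mul_of_nonneg_left _ (by norm_num : (0:ℝ) ≤ 2)
      exact mul_le_mul_of_nonneg_left hc2 hz
    have hKeq : K*(1+t)^p * E t = 2 * ((1+t)^p * (E 0 ^ γ * (‖A‖^2 * (E t / ν)))) := by
      rw [hKdef]; field_simp
    simp only [hE'def]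
    rw [hKeq]
    nlinarith [hc3]
  have hφmono : MonotoneOn φ S := by
    refine monotoneOn_of_hasDerivWithinAt_nonneg
      (f' := fun t => (E' t + K*(1+t)^p * E t) * Real.exp (g t)) (convex_Ici 0)
      (fun t ht => (hφderiv t ht).continuousWithinAt) ?_ ?_
    · intro t ht
      rw [interior_Ici] at ht ⊢
      exact (hφderiv t (Set.Ioi_subset_Ici_self ht)).mono Set.Ioi_subset_Ici_self
    · intro t ht
      rw [interior_Ici] at ht
      exact mul_nonneg (hKey t (Set.Ioi_subset_Ici_self ht)) (Real.exp_nonneg _)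
  have hφ0 : φ 0 = E 0 := by
    simp [hφdef, hgdef]
  have hEpos : ∀ t ∈ S, 0 < E t := by
    intro t ht
    have h1 := hφmono Set.self_mem_Ici ht (by simpa [hSdef] using ht)
    rw [hφ0] at h1
    have h2 : 0 < E t * Real.exp (g t) := lt_of_lt_of_le hE0pos h1
    have h3 := Real.exp_pos (g t)
    nlinarith
  -- lower bound ν E ≤ ‖Au‖²
  have hnuE : ∀ t ∈ S, ν * E t ≤ ‖A (u t)‖^2 := by
    intro t ht
    rcases eq_or_ne (u t) 0 with h | h
    · exfalso
      have : E t = 0 := by simp [hEdef, h]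
      exact absurd this (ne_of_gt (hEpos t ht))
    · have hb : 0 < ‖u t‖ := norm_pos_iff.mpr h
      have h1 := hA_coer (u t)
      have h2 : E t ≤ ‖A (u t)‖ * ‖u t‖ := real_inner_le_norm (A (u t)) (u t)
      have h3 : ν * ‖u t‖ ≤ ‖A (u t)‖ := by nlinarith
      nlinarith [norm_nonneg (A (u t))]
  -- the function ψ
  set a : ℝ := 2*γ*ν/(p+1) with hadef
  have ha_pos : 0 < a := by positivity
  have ha_eq : a * (p+1) = 2*γ*ν := by rw [hadef]; field_simp
  set ψ : ℝ → ℝ := fun t => E t ^ (-γ) - a * ((1+t)^(p+1) - 1) with hψdef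
  set ψ' : ℝ → ℝ := fun t => -γ * E t ^ (-γ-1) * E' t - a*((p+1)*(1+t)^p) with hψ'def
  have hψderiv : ∀ t ∈ S, HasDerivWithinAt ψ (ψ' t) S t := by
    intro t ht
    have h1 := (hEderiv t ht).rpow_const (p := -γ) (Or.inl (hEpos t ht).ne')
    have h2 := (((hpow_deriv t ht).sub_const 1).const_mul a).hasDerivWithinAt (s := S)
    refine (h1.sub h2).congr_deriv ?_
    simp only [hψ'def]
    ring
  have hψ'nonneg : ∀ t ∈ S, 0 ≤ ψ' t := by
    intro t ht
    have hE := hEpos t ht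
    have hr : E t ^ (-γ-1) * E t ^ γ = (E t)⁻¹ := by
      rw [← Real.rpow_add hE, show -γ-1+γ = -1 by ring, Real.rpow_neg_one]
    have hz : (0:ℝ) ≤ (1+t)^p := (Real.rpow_pos_of_pos (h1t t ht) p).le
    have hν' : ν ≤ ‖A (u t)‖^2 * (E t)⁻¹ := by
      rw [← div_eq_mul_inv, le_div_iff₀ hE]
      linarith [hnuE t ht]
    have hexp : ψ' t = 2*γ*(1+t)^p*‖A (u t)‖^2 * (E t ^ (-γ-1) * E t ^ γ)
        - a*(p+1)*(1+t)^p := by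
      simp only [hψ'def, hE'def]
      ring
    rw [hexp, hr, ha_eq]
    have h9 : 0 ≤ (2*γ*(1+t)^p) * (‖A (u t)‖^2 * (E t)⁻¹ - ν) := by
      apply mul_nonneg
      · positivity
      · linarith
    nlinarith [h9]
  have hψmono : MonotoneOn ψ S := by
    refine monotoneOn_of_hasDerivWithinAt_nonneg (f' := ψ') (convex_Ici 0)
      (fun t ht => (hψderiv t ht).continuousWithinAt) ?_ ?_
    · intro t ht
      rw [interior_Ici] at ht ⊢
      exact (hψderiv t (Set.Ioi_subset_Ici_self ht)).mono Set.Ioi_subset_Ici_self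
    · intro t ht
      rw [interior_Ici] at ht
      exact hψ'nonneg t (Set.Ioi_subset_Ici_self ht)
  have hψ0 : ψ 0 = E 0 ^ (-γ) := by
    simp [hψdef]
  have hψineq : ∀ t ∈ S, E 0 ^ (-γ) + a * ((1+t)^(p+1) - 1) ≤ E t ^ (-γ) := by
    intro t ht
    have h1 := hψmono Set.self_mem_Ici ht (by simpa [hSdef] using ht)
    rw [hψ0] at h1
    simp only [hψdef] at h1
    linarith
  -- final bound
  set m : ℝ := min (E 0 ^ (-γ)) a with hmdef
  have hm : 0 < m := lt_min (Real.rpow_pos_of_pos hE0pos _) ha_pos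
  have hlow : ∀ t ∈ S, m * (1+t)^(p+1) ≤ E t ^ (-γ) := by
    intro t ht
    have hs1 : (1:ℝ) ≤ (1+t)^(p+1) := Real.one_le_rpow (by linarith [Set.mem_Ici.mp ht]) hp1pos.le
    have hm1 : m ≤ E 0 ^ (-γ) := min_le_left _ _
    have hm2 : m ≤ a := min_le_right _ _
    have := hψineq t ht
    nlinarith [mul_nonneg (sub_nonneg.mpr hm2) (sub_nonneg.mpr hs1)]
  refine ⟨m ^ (-1/γ), Real.rpow_pos_of_pos hm _, ?_⟩
  intro t ht
  have hE := hEpos t ht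
  have h1t' := h1t t ht
  have hpos : 0 < m * (1+t)^(p+1) := mul_pos hm (Real.rpow_pos_of_pos h1t' _)
  have h2 : (E t ^ (-γ)) ^ (-1/γ) ≤ (m * (1+t)^(p+1)) ^ (-1/γ) :=
    Real.rpow_le_rpow_of_nonpos hpos (hlow t ht)
      (by rw [neg_div]; exact neg_nonpos.mpr (by positivity))
  have hL : (E t ^ (-γ)) ^ (-1/γ) = E t := by
    rw [← Real.rpow_mul (hEnn t)]
    rw [show (-γ) * (-1/γ) = 1 by field_simp]
    exact Real.rpow_one _
  have hR : (m * (1+t)^(p+1)) ^ (-1/γ)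
      = m ^ (-1/γ) * (1+t) ^ (-(p+1)/γ) := by
    rw [Real.mul_rpow hm.le (Real.rpow_pos_of_pos h1t' _).le,
      ← Real.rpow_mul (by linarith : (0:ℝ) ≤ 1+t)]
    congr 1
    ring
  rw [hL, hR] at h2
  exact h2
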